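/- Let G be a finite group and let γ = Σ_{g∈G} g ∈ ℤ[G]. Then the kernel of ρ : ℤ[G] ⊕ ℤ[G] → ℤ[G×G] is the subgroup generated by the single element (γ, −γ); in particular Ker ρ is free of rank 1 with trivial G-action. -/

import Mathlib

set_option linter.unusedSectionVars false

open TensorProduct

attribute [local instance 2000] TensorProduct.leftModule Finsupp.module Prod.instModule
  Submodule.Quotient.module Pi.module

namespace Paper

variable (G : Type) [Group G] [Fintype G]

/-- The `G`-equivariant map `ρ : ℤ[G] ⊕ ℤ[G] → ℤ[G×G]` with
`ρ(g, 0) = ∑_{g'} (g, g')` and `ρ(0, g) = ∑_{g'} (g', g)`. -/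
noncomputable def rho : ((G →₀ ℤ) × (G →₀ ℤ)) →ₗ[ℤ] ((G × G) →₀ ℤ) :=
  LinearMap.coprod
    ((Finsupp.lift ((G × G) →₀ ℤ) ℤ G) fun g => ∑ g' : G, Finsupp.single (g, g') (1 : ℤ))
    ((Finsupp.lift ((G × G) →₀ ℤ) ℤ G) fun g => ∑ g' : G, Finsupp.single (g', g) (1 : ℤ))

lemma rho_single_left (g : G) :
    rho G (Finsupp.single g 1, 0) = ∑ g' : G, Finsupp.single (g, g') (1 : ℤ) := by
  simp [rho, Finsupp.sum_single_index]

lemma rho_single_right (g : G) :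
    rho G (0, Finsupp.single g 1) = ∑ g' : G, Finsupp.single (g', g) (1 : ℤ) := by
  simp [rho, Finsupp.sum_single_index]

/-- `γ = ∑_{g ∈ G} g ∈ ℤ[G]`. -/
noncomputable def gamma : G →₀ ℤ := ∑ g : G, Finsupp.single g (1 : ℤ)

lemma gamma_apply (x : G) : gamma G x = 1 := by
  simp [gamma, Finsupp.finset_sum_apply, Finsupp.single_apply]

lemma rho_apply (a b : G →₀ ℤ) (x y : G) : rho G (a, b) (x, y) = a x + b y := by
  classical
  simp only [rho, LinearMap.coprod_apply, Finsupp.lift_apply, Finsupp.add_apply,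
    Finsupp.sum_apply, Finsupp.smul_apply, Finsupp.finset_sum_apply, Finsupp.single_apply,
    Prod.mk.injEq, smul_eq_mul, ite_and]
  rw [Finsupp.sum, Finsupp.sum]
  simp [Finset.sum_ite_eq, Finset.sum_ite_eq', Finsupp.notMem_support_iff]
  split_ifs <;> omega

lemma mem_ker_iff (v : (G →₀ ℤ) × (G →₀ ℤ)) :
    v ∈ LinearMap.ker (rho G) ↔ ∀ x y : G, v.1 x + v.2 y = 0 := by
  rw [LinearMap.mem_ker]
  constructor
  · intro h x y
    have := congrFun (congrArg DFunLike.coe h) (x, y)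
    rwa [show v = (v.1, v.2) from rfl, rho_apply] at this
  · intro h
    ext ⟨x, y⟩
    rw [show v = (v.1, v.2) from rfl, rho_apply]
    exact h x y

lemma ker_eq_span : LinearMap.ker (rho G) =
    Submodule.span ℤ {((gamma G, -gamma G) : (G →₀ ℤ) × (G →₀ ℤ))} := by
  apply le_antisymm
  · intro v hv
    rw [mem_ker_iff] at hv
    rw [Submodule.mem_span_singleton]
    refine ⟨v.1 1, ?_⟩
    have hv1 : ∀ x, v.1 x = v.1 1 := fun x => by
      have h1 := hv x 1; have h2 := hv 1 1; omega
    have hv2 : ∀ y, v.2 y = -(v.1 1) := fun y => by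
      have := hv 1 y; omega
    have : ((v.1 1 : ℤ) • (gamma G, -gamma G) : (G →₀ ℤ) × (G →₀ ℤ)) = (v.1, v.2) := by
      refine Prod.ext ?_ ?_ <;> ext x <;>
        simp [gamma_apply, hv1 x, hv2 x]
    simpa using this
  · rw [Submodule.span_singleton_le_iff_mem, mem_ker_iff]
    intro x y
    simp [gamma_apply]

lemma ker_gen_mem : ((gamma G, -gamma G) : (G →₀ ℤ) × (G →₀ ℤ)) ∈ LinearMap.ker (rho G) := by
  rw [ker_eq_span]; exact Submodule.mem_span_singleton_self _

noncomputable def toKer : ℤ →ₗ[ℤ] ↥(LinearMap.ker (rho G)) :=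
  LinearMap.toSpanSingleton ℤ _ ⟨(gamma G, -gamma G), ker_gen_mem G⟩

lemma toKer_bij : Function.Bijective (toKer G) := by
  constructor
  · intro c d h
    have := congrArg (fun w : ↥(LinearMap.ker (rho G)) => (w : (G →₀ ℤ) × (G →₀ ℤ)).1 1) h
    simpa [toKer, LinearMap.toSpanSingleton_apply, gamma_apply] using this
  · rintro ⟨v, hv⟩
    rw [ker_eq_span, Submodule.mem_span_singleton] at hv
    obtain ⟨c, hc⟩ := hv
    exact ⟨c, Subtype.ext (by simpa [toKer, LinearMap.toSpanSingleton_apply] using hc)⟩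

end Paper

namespace Paper

/-- Direct sum (product) of two representations. -/
noncomputable def prodRep {G : Type} [Group G] {V W : Type} [AddCommGroup V] [Module ℤ V]
    [AddCommGroup W] [Module ℤ W]
    (ρ : Representation ℤ G V) (σ : Representation ℤ G W) :
    Representation ℤ G (V × W) where
  toFun g := (ρ g).prodMap (σ g)
  map_one' := by
    show (ρ 1).prodMap (σ 1) = 1
    rw [map_one, map_one]
    refine LinearMap.ext fun x => ?_
    simp [LinearMap.prodMap_apply]
  map_mul' g h := by
    refine LinearMap.ext fun x => ?_
    simp [LinearMap.prodMap_apply, Module.End.mul_apply]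

/-- The permutation representation on `G →₀ ℤ` induced by a `G`-action on `H`
(the former `Representation.ofMulAction`, which acted on `H →₀ k`). -/
noncomputable def ofMulActionFinsupp (k : Type) [CommSemiring k] (G : Type) [Monoid G]
    (H : Type) [MulAction G H] : Representation k G (H →₀ k) where
  toFun g := Finsupp.lmapDomain k k (g • ·)
  map_one' := by ext; simp
  map_mul' x y := by ext; simp [mul_smul]

lemma gamma_invariant (G : Type) [Group G] [Fintype G] (g : G) :
    ofMulActionFinsupp ℤ G G g (gamma G) = gamma G := by
  rw [gamma, map_sum]
  simp only [ofMulActionFinsupp, MonoidHom.coe_mk, OneHom.coe_mk, Finsupp.lmapDomain_apply,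
    Finsupp.mapDomain_single]
  exact Fintype.sum_bijective (g • ·) (MulAction.bijective g)
    (fun h => Finsupp.single (g • h) 1) (fun h => Finsupp.single h 1) (fun x => rfl)

/-- `Ker ρ` is generated by `(γ, -γ)`; in particular it is free of rank `1`
with trivial `G`-action. -/
theorem statement_5 {G : Type} [Group G] [Fintype G] :
    LinearMap.ker (rho G) = Submodule.span ℤ {((gamma G, -gamma G) : (G →₀ ℤ) × (G →₀ ℤ))} ∧
    Nonempty (↥(LinearMap.ker (rho G)) ≃ₗ[ℤ] ℤ) ∧
    (∀ (g : G) (v : (G →₀ ℤ) × (G →₀ ℤ)), v ∈ LinearMap.ker (rho G) →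
      prodRep (ofMulActionFinsupp ℤ G G) (ofMulActionFinsupp ℤ G G) g v = v) := by
  refine ⟨ker_eq_span G, ⟨(LinearEquiv.ofBijective (toKer G) (toKer_bij G)).symm⟩, ?_⟩
  intro g v hv
  rw [ker_eq_span, Submodule.mem_span_singleton] at hv
  obtain ⟨c, rfl⟩ := hv
  show ((ofMulActionFinsupp ℤ G G g).prodMap (ofMulActionFinsupp ℤ G G g)) _ = _
  rw [LinearMap.prodMap_apply]
  simp only [Prod.smul_fst, Prod.smul_snd, map_smul, map_neg, gamma_invariant]
  rfl

end Paper
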